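/- For all α > 0, θ > 0 and β > 0, the mean of the extended xgamma distribution is ∫₀^∞ x · f(x; α, θ, β) dx = (θ·α + β·(α+2)) / (θ·(θ+β)). -/

import Mathlib

open MeasureTheory Real

/-- The mean of the extended xgamma distribution. -/
theorem exg_mean (α θ β : ℝ) (hα : 0 < α) (hθ : 0 < θ) (hβ : 0 < β) :
    ∫ x in Set.Ioi (0 : ℝ),
        x * ((θ ^ (α + 1) / ((θ + β) * Real.Gamma (α + 2))) * (α ^ 2 + α + θ * β * x ^ 2) *
          Real.exp (-θ * x) * x ^ (α - 1))
      = (θ * α + β * (α + 2)) / (θ * (θ + β)) := by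
  set C : ℝ := θ ^ (α + 1) / ((θ + β) * Real.Gamma (α + 2)) with hC
  have key : ∀ s : ℝ, 0 < s →
      ∫ x in Set.Ioi (0 : ℝ), x ^ (s - 1) * Real.exp (-(θ * x)) = (1 / θ) ^ s * Real.Gamma s :=
    fun s hs => Real.integral_rpow_mul_exp_neg_mul_Ioi hs hθ
  have hint : ∀ s : ℝ, 0 < s →
      IntegrableOn (fun x : ℝ => x ^ (s - 1) * Real.exp (-(θ * x))) (Set.Ioi 0) := by
    intro s hs
    have := integrableOn_rpow_mul_exp_neg_mul_rpow (p := 1) (s := s - 1) (b := θ)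
      (by linarith) one_pos hθ
    refine this.congr_fun (fun x hx => ?_) measurableSet_Ioi
    dsimp only
    rw [Real.rpow_one, neg_mul]
  have congr1 : (∫ x in Set.Ioi (0 : ℝ),
        x * (C * (α ^ 2 + α + θ * β * x ^ 2) * Real.exp (-θ * x) * x ^ (α - 1)))
      = ∫ x in Set.Ioi (0 : ℝ),
        (C * (α ^ 2 + α)) * (x ^ ((α + 1) - 1) * Real.exp (-(θ * x)))
          + (C * (θ * β)) * (x ^ ((α + 3) - 1) * Real.exp (-(θ * x))) := by
    apply setIntegral_congr_fun measurableSet_Ioi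
    intro x hx
    have hx : (0 : ℝ) < x := hx
    have h1 : x ^ ((α + 1) - 1) = x * x ^ (α - 1) := by
      rw [show (α + 1) - 1 = 1 + (α - 1) by ring, Real.rpow_add hx, Real.rpow_one]
    have h2 : x ^ ((α + 3) - 1) = x * x * x * x ^ (α - 1) := by
      rw [show (α + 3) - 1 = 1 + (1 + (1 + (α - 1))) by ring, Real.rpow_add hx,
        Real.rpow_add hx, Real.rpow_add hx, Real.rpow_one]
      ring
    simp only [h1, h2, neg_mul]
    ring
  rw [congr1, integral_add (((hint _ (by linarith)).const_mul _))
      (((hint _ (by linarith)).const_mul _)), integral_const_mul, integral_const_mul,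
    key _ (by linarith), key _ (by linarith)]
  -- Gamma recurrences
  have hΓ1 : (0 : ℝ) < Real.Gamma (α + 1) := Real.Gamma_pos_of_pos (by linarith)
  have hΓ2 : Real.Gamma (α + 2) = (α + 1) * Real.Gamma (α + 1) := by
    rw [show α + 2 = (α + 1) + 1 by ring, Real.Gamma_add_one (by linarith)]
  have hΓ3 : Real.Gamma (α + 3) = (α + 2) * ((α + 1) * Real.Gamma (α + 1)) := by
    rw [show α + 3 = (α + 2) + 1 by ring, Real.Gamma_add_one (by linarith), hΓ2]
  have hE : (0 : ℝ) < θ ^ (α + 1) := Real.rpow_pos_of_pos hθ _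
  have e1 : (1 / θ) ^ (α + 1) = (θ ^ (α + 1))⁻¹ := by
    rw [one_div, Real.inv_rpow hθ.le]
  have e3 : (1 / θ) ^ (α + 3) = (θ ^ (α + 1))⁻¹ * θ⁻¹ * θ⁻¹ := by
    rw [show α + 3 = (α + 1) + 1 + 1 by ring, Real.rpow_add (by positivity),
      Real.rpow_add (by positivity), Real.rpow_one, e1, one_div]
  rw [e1, e3, hΓ3, hC, hΓ2]
  have h1 : (α : ℝ) + 1 ≠ 0 := by linarith
  have hθβ : θ + β ≠ 0 := by positivity
  field_simp
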